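/- Let m be an even positive integer, let f be a cyclic bent function on F_{2^{m−1}} × F_2, and for a ∈ F_{2^{m−1}}* choose ε_a ∈ F_2. Let B_∞ be the standard basis of ℂ^{2^m}, let B_0 = { 2^{−m/2} ( (−1)^{Tr^{m−1}_1(λ x₁) + ν x₂} )_{(x₁,x₂) ∈ F_{2^{m−1}} × F_2} : (λ,ν) ∈ F_{2^{m−1}} × F_2 }, and for a ∈ F_{2^{m−1}}* let B_a = { 2^{−m/2} ( (−1)^{f(a x₁, x₂ + ε_a) + Tr^{m−1}_1(λ x₁) + ν x₂} )_{(x₁,x₂)} : (λ,ν) ∈ F_{2^{m−1}} × F_2 }. Then C_f = B_∞ ∪ B_0 ∪ ⋃_{a ∈ F_{2^{m−1}}*} B_a consists of N = 2^{2m−1} + 2^m pairwise distinct unit-norm vectors in ℂ^{K} with K = 2^m, and its maximum crosscorrelation amplitude satisfies I_max(C_f) = 2^{−m/2} = √( (3N − K² − 2K) / ((N − K)(K + 2)) ); that is, C_f is a real-valued (2^{2m−1}+2^m, 2^m) codebook meeting the Levenshtein bound with equality. -/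

import Mathlib

open Finset

noncomputable section

abbrev Fq (n : ℕ) := GaloisField 2 n

noncomputable instance (n : ℕ) : Fintype (Fq n) := Fintype.ofFinite _

/-- Absolute trace from `F_{2^n}` to `F_2`. -/
noncomputable def tr1 (n : ℕ) (x : Fq n) : ZMod 2 :=
  Algebra.trace (ZMod 2) (Fq n) x

/-- `(-1)^x` for `x : F_2`, as an integer. -/
def chi (x : ZMod 2) : ℤ := (-1 : ℤ) ^ x.val

/-- Walsh transform of a Boolean function on `F_{2^n} × F_2`. -/
noncomputable def walsh (n : ℕ) (f : Fq n × ZMod 2 → ZMod 2)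
    (lam : Fq n) (nu : ZMod 2) : ℤ :=
  ∑ x : Fq n × ZMod 2, chi (f x + tr1 n (lam * x.1) + nu * x.2)

/-- A Boolean function on `F_{2^{m-1}} × F_2` is bent if all its Walsh coefficients
are `± 2^(m/2)`. -/
def IsBent (m : ℕ) (f : Fq (m - 1) × ZMod 2 → ZMod 2) : Prop :=
  ∀ lam nu, walsh (m - 1) f lam nu = 2 ^ (m / 2) ∨ walsh (m - 1) f lam nu = -(2 ^ (m / 2))

/-- Cyclic bent function on `F_{2^{m-1}} × F_2`. -/
def IsCyclicBent (m : ℕ) (f : Fq (m - 1) × ZMod 2 → ZMod 2) : Prop :=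
  ∀ a b : Fq (m - 1), a ≠ b → ∀ ε : ZMod 2,
    IsBent m fun x => f (a * x.1, x.2) + f (b * x.1, x.2 + ε)

noncomputable instance (n : ℕ) : DecidableEq (Fq n) := Classical.decEq _

/-- Vector of `B_0`: coordinates `2^{-m/2} (-1)^{Tr(λ x₁) + ν x₂}`. -/
noncomputable def cbVec0 (m : ℕ) (lam : Fq (m - 1)) (nu : ZMod 2) :
    EuclideanSpace ℂ (Fq (m - 1) × ZMod 2) :=
  WithLp.toLp 2 fun x => (-1 : ℂ) ^ (tr1 (m - 1) (lam * x.1) + nu * x.2).val / (2 : ℂ) ^ (m / 2)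

/-- Vector of `B_a` (`a ≠ 0`): coordinates
`2^{-m/2} (-1)^{f(a x₁, x₂ + ε_a) + Tr(λ x₁) + ν x₂}`. -/
noncomputable def cbVecA (m : ℕ) (f : Fq (m - 1) × ZMod 2 → ZMod 2)
    (ε : Fq (m - 1) → ZMod 2) (a lam : Fq (m - 1)) (nu : ZMod 2) :
    EuclideanSpace ℂ (Fq (m - 1) × ZMod 2) :=
  WithLp.toLp 2 fun x =>
    (-1 : ℂ) ^ (f (a * x.1, x.2 + ε a) + tr1 (m - 1) (lam * x.1) + nu * x.2).val
      / (2 : ℂ) ^ (m / 2)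

/-- The codebook `C_f = B_∞ ∪ B_0 ∪ ⋃_{a ≠ 0} B_a`. -/
noncomputable def codebookCf (m : ℕ) (f : Fq (m - 1) × ZMod 2 → ZMod 2)
    (ε : Fq (m - 1) → ZMod 2) : Set (EuclideanSpace ℂ (Fq (m - 1) × ZMod 2)) :=
  (Set.range fun p : Fq (m - 1) × ZMod 2 => EuclideanSpace.single p (1 : ℂ))
    ∪ (Set.range fun p : Fq (m - 1) × ZMod 2 => cbVec0 m p.1 p.2)
    ∪ ⋃ a ∈ {a : Fq (m - 1) | a ≠ 0},
        Set.range fun p : Fq (m - 1) × ZMod 2 => cbVecA m f ε a p.1 p.2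

/-! ### Auxiliary lemmas -/

private lemma zmod2_add_self (u : ZMod 2) : u + u = 0 := by revert u; decide

private lemma zmod2_cases (u : ZMod 2) : u = 0 ∨ u = 1 := by revert u; decide

private lemma chi_add (u v : ZMod 2) : chi (u + v) = chi u * chi v := by revert u v; decide

private lemma chi_abs (u : ZMod 2) : |chi u| = 1 := by revert u; decide

private lemma chi_zero : chi 0 = 1 := rfl

private lemma tr1_add (n : ℕ) (x y : Fq n) : tr1 n (x + y) = tr1 n x + tr1 n y :=
  map_add (Algebra.trace (ZMod 2) (Fq n)) x y

private lemma fq_add_self (n : ℕ) (x : Fq n) : x + x = 0 :=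
  CharTwo.add_self_eq_zero x

private lemma sum_chi_tr (n : ℕ) : ∑ y : Fq n, chi (tr1 n y) = 0 := by
  obtain ⟨t, ht⟩ : ∃ t : Fq n, tr1 n t = 1 := by
    have h := Algebra.trace_ne_zero (ZMod 2) (Fq n)
    obtain ⟨t, ht⟩ := DFunLike.ne_iff.mp h
    exact ⟨t, ((zmod2_cases _).resolve_left ht)⟩
  have key : ∑ y : Fq n, chi (tr1 n (y + t)) = ∑ y : Fq n, chi (tr1 n y) :=
    Fintype.sum_equiv (Equiv.addRight t) _ _ (fun y => rfl)
  have hflip : ∀ y : Fq n, chi (tr1 n (y + t)) = - chi (tr1 n y) := by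
    intro y
    rw [tr1_add, ht]
    have : ∀ u : ZMod 2, chi (u + 1) = - chi u := by decide
    exact this _
  simp only [hflip, Finset.sum_neg_distrib] at key
  omega

private lemma sum_chi_char (n : ℕ) (μ : Fq n) (η : ZMod 2) (h : ¬(μ = 0 ∧ η = 0)) :
    ∑ x : Fq n × ZMod 2, chi (tr1 n (μ * x.1) + η * x.2) = 0 := by
  rw [Fintype.sum_prod_type]
  have hsp : ∀ x1 : Fq n, ∑ x2 : ZMod 2, chi (tr1 n (μ * x1) + η * x2)
      = chi (tr1 n (μ * x1)) * ∑ x2 : ZMod 2, chi (η * x2) := by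
    intro x1; rw [Finset.mul_sum]; exact Finset.sum_congr rfl fun x2 _ => chi_add _ _
  simp only [hsp]
  rw [← Finset.sum_mul]
  rcases zmod2_cases η with rfl | rfl
  · have hμ : μ ≠ 0 := fun h0 => h ⟨h0, rfl⟩
    have h1 : ∑ x1 : Fq n, chi (tr1 n (μ * x1)) = ∑ y : Fq n, chi (tr1 n y) :=
      Fintype.sum_equiv (Equiv.mulLeft₀ μ hμ) _ _ (fun y => rfl)
    rw [h1, sum_chi_tr]
    ring
  · have h2 : ∑ x2 : ZMod 2, chi (1 * x2) = 0 := by decide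
    rw [h2, mul_zero]

private lemma sum_shift {α : Type*} [Fintype α] (F : α × ZMod 2 → ℤ) (e : ZMod 2) :
    ∑ x : α × ZMod 2, F (x.1, x.2 + e) = ∑ x : α × ZMod 2, F x :=
  Fintype.sum_equiv (Equiv.prodCongr (Equiv.refl α) (Equiv.addRight e)) _ _
    (fun x => by rcases x with ⟨a, b⟩; rfl)

private lemma sum_chi_add_const {α : Type*} [Fintype α] (G : α → ZMod 2) (c : ZMod 2) :
    ∑ x, chi (G x + c) = chi c * ∑ x, chi (G x) := by
  rw [Finset.mul_sum]
  exact Finset.sum_congr rfl fun x _ => by rw [chi_add, mul_comm]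

private lemma walsh_abs {m : ℕ} {g : Fq (m - 1) × ZMod 2 → ZMod 2} (hg : IsBent m g)
    (lam : Fq (m - 1)) (nu : ZMod 2) : |walsh (m - 1) g lam nu| = 2 ^ (m / 2) := by
  rcases hg lam nu with h | h <;> rw [h]
  · exact abs_of_nonneg (by positivity)
  · rw [abs_neg]; exact abs_of_nonneg (by positivity)

/-- Walsh-type sum for a single twisted copy of `f` is `± 2^{m/2}` in absolute value. -/
private lemma W1 {m : ℕ} {f : Fq (m - 1) × ZMod 2 → ZMod 2} (hf : IsCyclicBent m f)
    {a : Fq (m - 1)} (ha : a ≠ 0) (e : ZMod 2) (μ : Fq (m - 1)) (η : ZMod 2) :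
    |∑ x : Fq (m - 1) × ZMod 2,
        chi (f (a * x.1, x.2 + e) + tr1 (m - 1) (μ * x.1) + η * x.2)| = 2 ^ (m / 2) := by
  have step1 : ∑ x : Fq (m - 1) × ZMod 2,
        chi (f (a * x.1, x.2 + e) + tr1 (m - 1) (μ * x.1) + η * x.2)
      = chi (η * e) * ∑ x : Fq (m - 1) × ZMod 2,
          chi (f (a * x.1, x.2) + tr1 (m - 1) (μ * x.1) + η * x.2) := by
    rw [← sum_chi_add_const
      (fun x : Fq (m - 1) × ZMod 2 => f (a * x.1, x.2) + tr1 (m - 1) (μ * x.1) + η * x.2) (η * e)]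
    rw [← sum_shift
      (fun x : Fq (m - 1) × ZMod 2 =>
        chi (f (a * x.1, x.2) + tr1 (m - 1) (μ * x.1) + η * x.2 + η * e)) e]
    refine Finset.sum_congr rfl fun x _ => ?_
    congr 1
    linear_combination -zmod2_add_self (η * e)
  set c := f (0, 0) with hc
  set d := f (0, 0) + f (0, 1) with hd
  have hf0 : ∀ y : ZMod 2, f (0, y) = c + d * y := by
    intro y
    rcases zmod2_cases y with rfl | rfl
    · rw [mul_zero, add_zero]
    · rw [mul_one, hd]
      linear_combination -zmod2_add_self c
  have hb := hf a 0 ha 0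
  have hw := walsh_abs hb μ (η + d)
  have hkey : walsh (m - 1) (fun x => f (a * x.1, x.2) + f (0 * x.1, x.2 + 0)) μ (η + d)
      = chi c * ∑ x : Fq (m - 1) × ZMod 2,
          chi (f (a * x.1, x.2) + tr1 (m - 1) (μ * x.1) + η * x.2) := by
    rw [walsh, ← sum_chi_add_const
      (fun x : Fq (m - 1) × ZMod 2 => f (a * x.1, x.2) + tr1 (m - 1) (μ * x.1) + η * x.2) c]
    refine Finset.sum_congr rfl fun x _ => ?_
    congr 1
    rw [zero_mul, add_zero, hf0 x.2]
    linear_combination zmod2_add_self (d * x.2)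
  rw [hkey, abs_mul, chi_abs, one_mul] at hw
  rw [step1, abs_mul, chi_abs, one_mul]
  exact hw

/-- Walsh-type sum for two twisted copies of `f` is `± 2^{m/2}` in absolute value. -/
private lemma W2 {m : ℕ} {f : Fq (m - 1) × ZMod 2 → ZMod 2} (hf : IsCyclicBent m f)
    {a b : Fq (m - 1)} (hab : a ≠ b) (ea eb : ZMod 2) (μ : Fq (m - 1)) (η : ZMod 2) :
    |∑ x : Fq (m - 1) × ZMod 2,
        chi (f (a * x.1, x.2 + ea) + f (b * x.1, x.2 + eb)
          + tr1 (m - 1) (μ * x.1) + η * x.2)| = 2 ^ (m / 2) := by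
  have hb' := hf a b hab (ea + eb)
  have hw := walsh_abs hb' μ η
  have hwalsh : walsh (m - 1) (fun x => f (a * x.1, x.2) + f (b * x.1, x.2 + (ea + eb))) μ η
      = ∑ y : Fq (m - 1) × ZMod 2,
          chi (f (a * y.1, y.2) + f (b * y.1, y.2 + (ea + eb))
            + tr1 (m - 1) (μ * y.1) + η * y.2) := rfl
  have hS : ∑ x : Fq (m - 1) × ZMod 2,
        chi (f (a * x.1, x.2 + ea) + f (b * x.1, x.2 + eb)
          + tr1 (m - 1) (μ * x.1) + η * x.2)
      = chi (η * ea)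
        * walsh (m - 1) (fun x => f (a * x.1, x.2) + f (b * x.1, x.2 + (ea + eb))) μ η := by
    rw [hwalsh]
    rw [← sum_chi_add_const
      (fun y : Fq (m - 1) × ZMod 2 =>
        f (a * y.1, y.2) + f (b * y.1, y.2 + (ea + eb))
          + tr1 (m - 1) (μ * y.1) + η * y.2) (η * ea)]
    rw [← sum_shift
      (fun y : Fq (m - 1) × ZMod 2 =>
        chi (f (a * y.1, y.2) + f (b * y.1, y.2 + (ea + eb))
          + tr1 (m - 1) (μ * y.1) + η * y.2 + η * ea)) ea]
    refine Finset.sum_congr rfl fun x _ => ?_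
    have h1 : x.2 + ea + (ea + eb) = x.2 + eb := by
      linear_combination zmod2_add_self ea
    show _ = chi (f (a * x.1, x.2 + ea) + f (b * x.1, x.2 + ea + (ea + eb))
      + tr1 (m - 1) (μ * x.1) + η * (x.2 + ea) + η * ea)
    rw [h1]
    congr 1
    linear_combination -zmod2_add_self (η * ea)
  rw [hS, abs_mul, chi_abs, one_mul]
  exact hw

/-! ### Vectors and inner products -/

/-- Common form of the codebook vectors of `B_0` and `B_a`. -/
private noncomputable def vecOf (m : ℕ) (g : Fq (m - 1) × ZMod 2 → ZMod 2) :
    EuclideanSpace ℂ (Fq (m - 1) × ZMod 2) :=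
  WithLp.toLp 2 fun x => (-1 : ℂ) ^ (g x).val / (2 : ℂ) ^ (m / 2)

private lemma cbVec0_eq_vecOf (m : ℕ) (lam : Fq (m - 1)) (nu : ZMod 2) :
    cbVec0 m lam nu = vecOf m (fun x => tr1 (m - 1) (lam * x.1) + nu * x.2) := rfl

private lemma cbVecA_eq_vecOf (m : ℕ) (f : Fq (m - 1) × ZMod 2 → ZMod 2)
    (ε : Fq (m - 1) → ZMod 2) (a lam : Fq (m - 1)) (nu : ZMod 2) :
    cbVecA m f ε a lam nu
      = vecOf m (fun x => f (a * x.1, x.2 + ε a) + tr1 (m - 1) (lam * x.1) + nu * x.2) := rfl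

private lemma vecOf_apply (m : ℕ) (g : Fq (m - 1) × ZMod 2 → ZMod 2)
    (x : Fq (m - 1) × ZMod 2) :
    vecOf m g x = ((chi (g x) : ℤ) : ℂ) / (2 : ℂ) ^ (m / 2) := by
  unfold vecOf chi
  push_cast
  rfl

private lemma cardX (m : ℕ) (hm2 : 2 ≤ m) :
    Fintype.card (Fq (m - 1) × ZMod 2) = 2 ^ m := by
  rw [Fintype.card_prod, ← Nat.card_eq_fintype_card (α := Fq (m - 1)),
    GaloisField.card 2 (m - 1) (by omega), ZMod.card]
  rw [← pow_succ]
  congr 1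
  omega

private lemma inner_vecOf {m : ℕ} (hh : m / 2 + m / 2 = m)
    (g h : Fq (m - 1) × ZMod 2 → ZMod 2) :
    @inner ℂ _ _ (vecOf m g) (vecOf m h)
      = ((∑ x : Fq (m - 1) × ZMod 2, chi (g x + h x) : ℤ) : ℂ) / (2 : ℂ) ^ m := by
  rw [PiLp.inner_apply]
  rw [Int.cast_sum, Finset.sum_div]
  refine Finset.sum_congr rfl fun x _ => ?_
  rw [vecOf_apply, vecOf_apply, chi_add, RCLike.inner_apply]
  rw [map_div₀, map_intCast, map_pow, map_ofNat]
  rw [div_mul_div_comm, ← pow_add, hh]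
  push_cast
  ring

private lemma inner_self_vecOf {m : ℕ} (hm2 : 2 ≤ m) (hh : m / 2 + m / 2 = m)
    (g : Fq (m - 1) × ZMod 2 → ZMod 2) :
    @inner ℂ _ _ (vecOf m g) (vecOf m g) = 1 := by
  rw [inner_vecOf hh]
  have hone : ∀ x : Fq (m - 1) × ZMod 2, chi (g x + g x) = 1 := fun x => by
    rw [zmod2_add_self, chi_zero]
  simp only [hone, Finset.sum_const, Finset.card_univ, nsmul_eq_mul, mul_one]
  rw [cardX m hm2]
  push_cast
  rw [div_self (pow_ne_zero m (two_ne_zero (α := ℂ)))]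

private lemma norm_vecOf {m : ℕ} (hm2 : 2 ≤ m) (hh : m / 2 + m / 2 = m)
    (g : Fq (m - 1) × ZMod 2 → ZMod 2) : ‖vecOf m g‖ = 1 := by
  have h1 := inner_self_vecOf hm2 hh g
  rw [inner_self_eq_norm_sq_to_K (𝕜 := ℂ) (vecOf m g)] at h1
  have h2 : (‖vecOf m g‖ : ℝ) ^ 2 = 1 := by
    have h3 : ((‖vecOf m g‖ ^ 2 : ℝ) : ℂ) = ((1 : ℝ) : ℂ) := by push_cast; exact h1
    exact_mod_cast h3
  nlinarith [norm_nonneg (vecOf m g)]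

private lemma abs_inner_vecOf_le {m : ℕ} (hh : m / 2 + m / 2 = m)
    (g h : Fq (m - 1) × ZMod 2 → ZMod 2)
    (hs : |∑ x : Fq (m - 1) × ZMod 2, chi (g x + h x)| ≤ 2 ^ (m / 2)) :
    ‖(@inner ℂ _ _ (vecOf m g) (vecOf m h))‖ ≤ ((2 : ℝ) ^ (m / 2))⁻¹ := by
  rw [inner_vecOf hh, norm_div, Complex.norm_intCast]
  have h2 : ‖((2 : ℂ) ^ m)‖ = (2 : ℝ) ^ m := by
    rw [norm_pow, Complex.norm_ofNat]
  rw [h2]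
  have hsr : |((∑ x : Fq (m - 1) × ZMod 2, chi (g x + h x) : ℤ) : ℝ)| ≤ (2 : ℝ) ^ (m / 2) := by
    exact_mod_cast hs
  rw [div_le_iff₀ (by positivity)]
  calc |((∑ x : Fq (m - 1) × ZMod 2, chi (g x + h x) : ℤ) : ℝ)|
      ≤ (2 : ℝ) ^ (m / 2) := hsr
    _ = ((2 : ℝ) ^ (m / 2))⁻¹ * (2 : ℝ) ^ m := by
        have hpow : (2 : ℝ) ^ m = 2 ^ (m / 2) * 2 ^ (m / 2) := by rw [← pow_add, hh]
        rw [hpow]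
        field_simp

private lemma abs_vecOf_apply (m : ℕ) (g : Fq (m - 1) × ZMod 2 → ZMod 2)
    (x : Fq (m - 1) × ZMod 2) :
    ‖(vecOf m g x)‖ = ((2 : ℝ) ^ (m / 2))⁻¹ := by
  rw [vecOf_apply, norm_div, Complex.norm_intCast]
  have : |((chi (g x) : ℤ) : ℝ)| = 1 := by exact_mod_cast chi_abs (g x)
  rw [this, norm_pow, Complex.norm_ofNat, one_div]

/-! ### The index type and the parametrization of the codebook -/

private def IdxType (m : ℕ) : Type :=
  (Fq (m - 1) × ZMod 2) ⊕ (Fq (m - 1) × ZMod 2)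
    ⊕ ({a : Fq (m - 1) // a ≠ 0} × (Fq (m - 1) × ZMod 2))

private noncomputable instance (m : ℕ) : Fintype (IdxType m) := by
  unfold IdxType; infer_instance

private noncomputable def Fmap (m : ℕ) (f : Fq (m - 1) × ZMod 2 → ZMod 2)
    (ε : Fq (m - 1) → ZMod 2) : IdxType m → EuclideanSpace ℂ (Fq (m - 1) × ZMod 2) :=
  fun i => match i with
  | Sum.inl p => EuclideanSpace.single p (1 : ℂ)
  | Sum.inr (Sum.inl p) => cbVec0 m p.1 p.2
  | Sum.inr (Sum.inr (a, p)) => cbVecA m f ε a.1 p.1 p.2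

private lemma range_Fmap (m : ℕ) (f : Fq (m - 1) × ZMod 2 → ZMod 2)
    (ε : Fq (m - 1) → ZMod 2) :
    Set.range (Fmap m f ε) = codebookCf m f ε := by
  unfold codebookCf
  ext v
  constructor
  · rintro ⟨i, rfl⟩
    match i with
    | Sum.inl p => exact Or.inl (Or.inl ⟨p, rfl⟩)
    | Sum.inr (Sum.inl p) => exact Or.inl (Or.inr ⟨p, rfl⟩)
    | Sum.inr (Sum.inr (a, p)) =>
      refine Or.inr ?_
      simp only [Set.mem_iUnion, Set.mem_setOf_eq, Set.mem_range]
      exact ⟨a.1, a.2, p, rfl⟩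
  · rintro ((⟨p, rfl⟩ | ⟨p, rfl⟩) | hv)
    · exact ⟨Sum.inl p, rfl⟩
    · exact ⟨Sum.inr (Sum.inl p), rfl⟩
    · simp only [Set.mem_iUnion, Set.mem_setOf_eq, Set.mem_range] at hv
      obtain ⟨a, ha, p, rfl⟩ := hv
      exact ⟨Sum.inr (Sum.inr (⟨a, ha⟩, p)), rfl⟩

private lemma norm_Fmap {m : ℕ} (hm2 : 2 ≤ m) (hh : m / 2 + m / 2 = m)
    (f : Fq (m - 1) × ZMod 2 → ZMod 2) (ε : Fq (m - 1) → ZMod 2) (i : IdxType m) :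
    ‖Fmap m f ε i‖ = 1 := by
  match i with
  | Sum.inl p =>
    show ‖EuclideanSpace.single p (1 : ℂ)‖ = 1
    rw [EuclideanSpace.norm_single]; norm_num
  | Sum.inr (Sum.inl p) =>
    show ‖cbVec0 m p.1 p.2‖ = 1
    rw [cbVec0_eq_vecOf]; exact norm_vecOf hm2 hh _
  | Sum.inr (Sum.inr (a, p)) =>
    show ‖cbVecA m f ε a.1 p.1 p.2‖ = 1
    rw [cbVecA_eq_vecOf]; exact norm_vecOf hm2 hh _

private lemma abs_inner_comm' {ι : Type*} [Fintype ι] (x y : EuclideanSpace ℂ ι) :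
    ‖(@inner ℂ _ _ x y)‖ = ‖(@inner ℂ _ _ y x)‖ := by
  rw [← inner_conj_symm, Complex.norm_conj]

private lemma fq_add_eq_zero {n : ℕ} {x y : Fq n} (h : x + y = 0) : x = y := by
  linear_combination h - fq_add_self n y

private lemma zmod2_add_eq_zero {x y : ZMod 2} (h : x + y = 0) : x = y := by
  have : ∀ x y : ZMod 2, x + y = 0 → x = y := by decide
  exact this x y h

private lemma abs_inner_single_vecOf (m : ℕ) (p : Fq (m - 1) × ZMod 2)
    (g : Fq (m - 1) × ZMod 2 → ZMod 2) :
    ‖(@inner ℂ _ _ (EuclideanSpace.single p (1 : ℂ)) (vecOf m g))‖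
      = ((2 : ℝ) ^ (m / 2))⁻¹ := by
  rw [EuclideanSpace.inner_single_left, map_one, one_mul]
  exact abs_vecOf_apply m g p

/-- The master bound: distinct indices give inner products of modulus at most `2^{-m/2}`. -/
private lemma master {m : ℕ} (hm2 : 2 ≤ m) (hh : m / 2 + m / 2 = m)
    {f : Fq (m - 1) × ZMod 2 → ZMod 2} (hf : IsCyclicBent m f)
    (ε : Fq (m - 1) → ZMod 2) (i j : IdxType m) (hij : i ≠ j) :
    ‖(@inner ℂ _ _ (Fmap m f ε i) (Fmap m f ε j))‖ ≤ ((2 : ℝ) ^ (m / 2))⁻¹ := by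
  have hinv0 : (0 : ℝ) ≤ ((2 : ℝ) ^ (m / 2))⁻¹ := by positivity
  -- case analysis
  match i, j with
  | Sum.inl p, Sum.inl q =>
    have hpq : p ≠ q := fun h => hij (by rw [h])
    show ‖(@inner ℂ _ _ (EuclideanSpace.single p (1:ℂ)) (EuclideanSpace.single q (1:ℂ)))‖ ≤ _
    rw [EuclideanSpace.inner_single_left, map_one, one_mul, EuclideanSpace.single_apply,
      if_neg hpq]
    simpa using hinv0
  | Sum.inl p, Sum.inr (Sum.inl q) =>
    show ‖(@inner ℂ _ _ (EuclideanSpace.single p (1:ℂ)) (cbVec0 m q.1 q.2))‖ ≤ _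
    rw [cbVec0_eq_vecOf, abs_inner_single_vecOf]
  | Sum.inl p, Sum.inr (Sum.inr (b, q)) =>
    show ‖(@inner ℂ _ _ (EuclideanSpace.single p (1:ℂ)) (cbVecA m f ε b.1 q.1 q.2))‖ ≤ _
    rw [cbVecA_eq_vecOf, abs_inner_single_vecOf]
  | Sum.inr (Sum.inl p), Sum.inl q =>
    show ‖(@inner ℂ _ _ (cbVec0 m p.1 p.2) (EuclideanSpace.single q (1:ℂ)))‖ ≤ _
    rw [abs_inner_comm', cbVec0_eq_vecOf, abs_inner_single_vecOf]
  | Sum.inr (Sum.inr (a, p)), Sum.inl q =>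
    show ‖(@inner ℂ _ _ (cbVecA m f ε a.1 p.1 p.2) (EuclideanSpace.single q (1:ℂ)))‖ ≤ _
    rw [abs_inner_comm', cbVecA_eq_vecOf, abs_inner_single_vecOf]
  | Sum.inr (Sum.inl p), Sum.inr (Sum.inl q) =>
    have hpq : p ≠ q := fun h => hij (by rw [h])
    show ‖(@inner ℂ _ _ (cbVec0 m p.1 p.2) (cbVec0 m q.1 q.2))‖ ≤ _
    rw [cbVec0_eq_vecOf, cbVec0_eq_vecOf]
    refine abs_inner_vecOf_le hh _ _ ?_
    have hsum : ∑ x : Fq (m - 1) × ZMod 2,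
          chi ((tr1 (m - 1) (p.1 * x.1) + p.2 * x.2) + (tr1 (m - 1) (q.1 * x.1) + q.2 * x.2))
        = ∑ x : Fq (m - 1) × ZMod 2,
            chi (tr1 (m - 1) ((p.1 + q.1) * x.1) + (p.2 + q.2) * x.2) := by
      refine Finset.sum_congr rfl fun x _ => ?_
      congr 1
      rw [add_mul, tr1_add, add_mul]
      ring
    rw [hsum, sum_chi_char (m - 1) _ _ ?hne]
    · simp only [abs_zero]; positivity
    case hne =>
      rintro ⟨h1, h2⟩
      exact hpq (Prod.ext (fq_add_eq_zero h1) (zmod2_add_eq_zero h2))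
  | Sum.inr (Sum.inl p), Sum.inr (Sum.inr (b, q)) =>
    show ‖(@inner ℂ _ _ (cbVec0 m p.1 p.2) (cbVecA m f ε b.1 q.1 q.2))‖ ≤ _
    rw [cbVec0_eq_vecOf, cbVecA_eq_vecOf]
    refine abs_inner_vecOf_le hh _ _ ?_
    have hsum : ∑ x : Fq (m - 1) × ZMod 2,
          chi ((tr1 (m - 1) (p.1 * x.1) + p.2 * x.2)
            + (f (b.1 * x.1, x.2 + ε b.1) + tr1 (m - 1) (q.1 * x.1) + q.2 * x.2))
        = ∑ x : Fq (m - 1) × ZMod 2,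
            chi (f (b.1 * x.1, x.2 + ε b.1)
              + tr1 (m - 1) ((p.1 + q.1) * x.1) + (p.2 + q.2) * x.2) := by
      refine Finset.sum_congr rfl fun x _ => ?_
      congr 1
      rw [add_mul, tr1_add, add_mul]
      ring
    rw [hsum, W1 hf b.2 (ε b.1) (p.1 + q.1) (p.2 + q.2)]
  | Sum.inr (Sum.inr (a, p)), Sum.inr (Sum.inl q) =>
    rw [abs_inner_comm']
    show ‖(@inner ℂ _ _ (cbVec0 m q.1 q.2) (cbVecA m f ε a.1 p.1 p.2))‖ ≤ _
    rw [cbVec0_eq_vecOf, cbVecA_eq_vecOf]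
    refine abs_inner_vecOf_le hh _ _ ?_
    have hsum : ∑ x : Fq (m - 1) × ZMod 2,
          chi ((tr1 (m - 1) (q.1 * x.1) + q.2 * x.2)
            + (f (a.1 * x.1, x.2 + ε a.1) + tr1 (m - 1) (p.1 * x.1) + p.2 * x.2))
        = ∑ x : Fq (m - 1) × ZMod 2,
            chi (f (a.1 * x.1, x.2 + ε a.1)
              + tr1 (m - 1) ((q.1 + p.1) * x.1) + (q.2 + p.2) * x.2) := by
      refine Finset.sum_congr rfl fun x _ => ?_
      congr 1
      rw [add_mul, tr1_add, add_mul]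
      ring
    rw [hsum, W1 hf a.2 (ε a.1) (q.1 + p.1) (q.2 + p.2)]
  | Sum.inr (Sum.inr (a, p)), Sum.inr (Sum.inr (b, q)) =>
    show ‖(@inner ℂ _ _ (cbVecA m f ε a.1 p.1 p.2) (cbVecA m f ε b.1 q.1 q.2))‖ ≤ _
    rw [cbVecA_eq_vecOf, cbVecA_eq_vecOf]
    refine abs_inner_vecOf_le hh _ _ ?_
    by_cases hab : a = b
    · -- same `a`, different `(λ, ν)`
      subst hab
      have hpq : p ≠ q := fun h => hij (by rw [h])
      have hsum : ∑ x : Fq (m - 1) × ZMod 2,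
            chi ((f (a.1 * x.1, x.2 + ε a.1) + tr1 (m - 1) (p.1 * x.1) + p.2 * x.2)
              + (f (a.1 * x.1, x.2 + ε a.1) + tr1 (m - 1) (q.1 * x.1) + q.2 * x.2))
          = ∑ x : Fq (m - 1) × ZMod 2,
              chi (tr1 (m - 1) ((p.1 + q.1) * x.1) + (p.2 + q.2) * x.2) := by
        refine Finset.sum_congr rfl fun x _ => ?_
        congr 1
        rw [add_mul, tr1_add, add_mul]
        linear_combination zmod2_add_self (f (a.1 * x.1, x.2 + ε a.1))
      rw [hsum, sum_chi_char (m - 1) _ _ ?hne2]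
      · simp only [abs_zero]; positivity
      case hne2 =>
        rintro ⟨h1, h2⟩
        exact hpq (Prod.ext (fq_add_eq_zero h1) (zmod2_add_eq_zero h2))
    · have hab1 : a.1 ≠ b.1 := fun h => hab (Subtype.ext h)
      have hsum : ∑ x : Fq (m - 1) × ZMod 2,
            chi ((f (a.1 * x.1, x.2 + ε a.1) + tr1 (m - 1) (p.1 * x.1) + p.2 * x.2)
              + (f (b.1 * x.1, x.2 + ε b.1) + tr1 (m - 1) (q.1 * x.1) + q.2 * x.2))
          = ∑ x : Fq (m - 1) × ZMod 2,
              chi (f (a.1 * x.1, x.2 + ε a.1) + f (b.1 * x.1, x.2 + ε b.1)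
                + tr1 (m - 1) ((p.1 + q.1) * x.1) + (p.2 + q.2) * x.2) := by
        refine Finset.sum_congr rfl fun x _ => ?_
        congr 1
        rw [add_mul, tr1_add, add_mul]
        ring
      rw [hsum, W2 hf hab1 (ε a.1) (ε b.1) (p.1 + q.1) (p.2 + q.2)]

private lemma Fmap_injective {m : ℕ} (hm2 : 2 ≤ m) (hh : m / 2 + m / 2 = m)
    {f : Fq (m - 1) × ZMod 2 → ZMod 2} (hf : IsCyclicBent m f)
    (ε : Fq (m - 1) → ZMod 2) : Function.Injective (Fmap m f ε) := by
  intro i j hij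
  by_contra hne
  have hb := master hm2 hh hf ε i j hne
  rw [hij] at hb
  rw [inner_self_eq_norm_sq_to_K (𝕜 := ℂ) (Fmap m f ε j)] at hb
  rw [norm_Fmap hm2 hh f ε j] at hb
  norm_num at hb
  have hgt : (1 : ℝ) < (2 : ℝ) ^ (m / 2) := one_lt_pow₀ (by norm_num) (by omega)
  have : ((2 : ℝ) ^ (m / 2))⁻¹ < 1 := by
    rw [inv_lt_one_iff₀]; right; exact hgt
  linarith

private lemma card_IdxType {m : ℕ} (hm2 : 2 ≤ m) :
    Fintype.card (IdxType m) = 2 ^ (2 * m - 1) + 2 ^ m := by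
  have hX : Fintype.card (Fq (m - 1) × ZMod 2) = 2 ^ m := cardX m hm2
  have hsub : Fintype.card {a : Fq (m - 1) // a ≠ 0} = 2 ^ (m - 1) - 1 := by
    have h1 : Fintype.card {a : Fq (m - 1) // ¬(a = 0)} =
        Fintype.card (Fq (m - 1)) - Fintype.card {a : Fq (m - 1) // a = 0} :=
      Fintype.card_subtype_compl _
    rw [Fintype.card_subtype_eq (0 : Fq (m - 1))] at h1
    rw [show Fintype.card (Fq (m - 1)) = 2 ^ (m - 1) by
      rw [← Nat.card_eq_fintype_card]; exact GaloisField.card 2 (m - 1) (by omega)] at h1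
    exact h1
  show Fintype.card ((Fq (m - 1) × ZMod 2) ⊕ (Fq (m - 1) × ZMod 2)
      ⊕ ({a : Fq (m - 1) // a ≠ 0} × (Fq (m - 1) × ZMod 2))) = _
  rw [Fintype.card_sum, Fintype.card_sum,
    show Fintype.card ({a : Fq (m - 1) // a ≠ 0} × (Fq (m - 1) × ZMod 2))
        = (2 ^ (m - 1) - 1) * 2 ^ m by rw [Fintype.card_prod, hX, hsub], hX]
  have h2 : 2 ^ (m - 1) * 2 ^ m = 2 ^ (2 * m - 1) := by
    rw [← pow_add]; congr 1; omega
  have h3 : (2 ^ (m - 1) - 1) * 2 ^ m = 2 ^ (2 * m - 1) - 2 ^ m := by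
    rw [Nat.sub_mul, one_mul, h2]
  have h4 : 2 ^ m ≤ 2 ^ (2 * m - 1) := Nat.pow_le_pow_right (by norm_num) (by omega)
  rw [h3, Nat.add_sub_cancel' h4, add_comm]

/-- `C_f` is an optimal `(2^{2m-1}+2^m, 2^m)` codebook meeting the
real Levenshtein bound with equality. -/
theorem stmt6 (m : ℕ) (hm : Even m) (hm0 : 0 < m)
    (f : Fq (m - 1) × ZMod 2 → ZMod 2) (hf : IsCyclicBent m f)
    (ε : Fq (m - 1) → ZMod 2) :
    (codebookCf m f ε).ncard = 2 ^ (2 * m - 1) + 2 ^ m ∧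
    (∀ c ∈ codebookCf m f ε, ‖c‖ = 1) ∧
    (∀ c ∈ codebookCf m f ε, ∀ c' ∈ codebookCf m f ε, c ≠ c' →
      ‖(@inner ℂ _ _ c c')‖ ≤ ((2 : ℝ) ^ (m / 2))⁻¹) ∧
    (∃ c ∈ codebookCf m f ε, ∃ c' ∈ codebookCf m f ε, c ≠ c' ∧
      ‖(@inner ℂ _ _ c c')‖ = ((2 : ℝ) ^ (m / 2))⁻¹) ∧
    ((2 : ℝ) ^ (m / 2))⁻¹
      = Real.sqrt ((3 * (2 ^ (2 * m - 1) + 2 ^ m : ℝ) - (2 ^ m : ℝ) ^ 2 - 2 * 2 ^ m)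
          / (((2 ^ (2 * m - 1) + 2 ^ m : ℝ) - 2 ^ m) * (2 ^ m + 2))) := by
  have hm2 : 2 ≤ m := by
    obtain ⟨k, hk⟩ := hm; omega
  have hh : m / 2 + m / 2 = m := by
    obtain ⟨k, hk⟩ := hm; omega
  refine ⟨?count, ?norms, ?bound, ?exist, ?alg⟩
  case count =>
    rw [← range_Fmap m f ε, ← Nat.card_coe_set_eq,
      Nat.card_range_of_injective (Fmap_injective hm2 hh hf ε),
      Nat.card_eq_fintype_card, card_IdxType hm2]
  case norms =>
    intro c hc
    rw [← range_Fmap m f ε] at hc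
    obtain ⟨i, rfl⟩ := hc
    exact norm_Fmap hm2 hh f ε i
  case bound =>
    intro c hc c' hc' hne
    rw [← range_Fmap m f ε] at hc hc'
    obtain ⟨i, rfl⟩ := hc
    obtain ⟨j, rfl⟩ := hc'
    exact master hm2 hh hf ε i j (fun h => hne (by rw [h]))
  case exist =>
    refine ⟨EuclideanSpace.single ((0 : Fq (m - 1)), (0 : ZMod 2)) (1 : ℂ),
      Or.inl (Or.inl ⟨((0 : Fq (m - 1)), (0 : ZMod 2)), rfl⟩),
      cbVec0 m 0 0, Or.inl (Or.inr ⟨((0 : Fq (m - 1)), (0 : ZMod 2)), rfl⟩), ?_, ?_⟩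
    · intro hEq
      have habs : ‖(@inner ℂ _ _
            (EuclideanSpace.single ((0 : Fq (m - 1)), (0 : ZMod 2)) (1 : ℂ)) (cbVec0 m 0 0))‖
          = ((2 : ℝ) ^ (m / 2))⁻¹ := by
        rw [cbVec0_eq_vecOf]; exact abs_inner_single_vecOf m _ _
      have habs2 : ((2 : ℝ) ^ (m / 2))⁻¹ = 1 := by
        rw [← habs, hEq, inner_self_eq_norm_sq_to_K (𝕜 := ℂ) (cbVec0 m 0 0),
          show ‖cbVec0 m 0 0‖ = 1 by rw [cbVec0_eq_vecOf]; exact norm_vecOf hm2 hh _]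
        norm_num
      have hgt : (1 : ℝ) < (2 : ℝ) ^ (m / 2) := one_lt_pow₀ (by norm_num) (by omega)
      have h1 : (2 : ℝ) ^ (m / 2) = 1 := inv_eq_one.mp habs2
      linarith
    · rw [cbVec0_eq_vecOf]; exact abs_inner_single_vecOf m _ _
  case alg =>
    set k := m / 2 with hk
    set K := (2 : ℝ) ^ k with hK
    have hK1 : (1 : ℝ) ≤ K := one_le_pow₀ (by norm_num)
    have h2m1 : (2 : ℝ) ^ (2 * m - 1) = K ^ 4 / 2 := by
      rw [eq_div_iff (two_ne_zero), ← pow_succ, hK, ← pow_mul]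
      congr 1
      omega
    have hmK : (2 : ℝ) ^ m = K ^ 2 := by
      rw [hK, ← pow_mul]
      congr 1
      omega
    rw [h2m1, hmK]
    have hKpos : (0 : ℝ) < K := by positivity
    have harg : (3 * (K ^ 4 / 2 + K ^ 2) - (K ^ 2) ^ 2 - 2 * K ^ 2)
        / ((K ^ 4 / 2 + K ^ 2 - K ^ 2) * (K ^ 2 + 2)) = (K⁻¹) ^ 2 := by
      have e : (K ^ 4 / 2 + K ^ 2 - K ^ 2) * (K ^ 2 + 2) = K ^ 4 / 2 * (K ^ 2 + 2) := by ring
      rw [e, inv_pow, inv_eq_one_div]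
      rw [div_eq_div_iff (by positivity) (by positivity)]
      ring
    rw [harg, Real.sqrt_sq (by positivity)]
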